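/- Let D be an almost skew diagram and let i be the maximum index with l_{i−1} > l_i. If Step A is permitted at row i but Step B is not, then V^{D^A} ≅ V^D as ℂ[Σ_D]-modules, where D^A is the result of Step A at row i; if Step B is permitted at row i but Step A is not, then V^{D^B} ≅ V^D as ℂ[Σ_D]-modules, where D^B is the result of Step B at row i. -/

import Mathlib

open scoped ENat

/-- A diagram: a finite set of boxes `(i, j)` (row `i` from the top, column `j` from the left). -/
abbrev Dg := Finset (ℕ × ℕ)

/-- The set of column indices of boxes in row `i` of `D`. -/
def row (D : Dg) (i : ℕ) : Finset ℕ := (D.filter (fun b => b.1 = i)).image Prod.snd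

/-- `l_i`: the least column index in row `i`, with the convention `l_i = ∞` for an empty row. -/
noncomputable def lRow (D : Dg) (i : ℕ) : ℕ∞ := (row D i).inf (fun j => (j : ℕ∞))

/-- `r_i`: the greatest column index in row `i`, with the convention `r_i = 0` for an empty row. -/
def rRow (D : Dg) (i : ℕ) : ℕ := (row D i).sup id

/-- Index `i ≥ 2` with `l_{i-1} > l_i`. -/
def Violation (D : Dg) (i : ℕ) : Prop := 2 ≤ i ∧ lRow D i < lRow D (i - 1)

/-- `i` is the maximum index with `l_{i-1} > l_i`. -/
def MaxViolation (D : Dg) (i : ℕ) : Prop := Violation D i ∧ ∀ i', Violation D i' → i' ≤ i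

/-- No index `i ≥ 2` has `l_{i-1} > l_i`. -/
def TerminalD (D : Dg) : Prop := ∀ i, ¬ Violation D i

/-- Step A is permitted at row `i`: `l_{i-1} > l_i` and (`r_i ≥ l_{i-1} - 1` or row `i-1` empty). -/
def StepAOk (D : Dg) (i : ℕ) : Prop :=
  Violation D i ∧ (lRow D (i - 1) - 1 ≤ (rRow D i : ℕ∞) ∨ row D (i - 1) = ∅)

/-- `l_i ≤ q < l_{i-1}`: the columns affected by Step A at row `i`. -/
def InL (D : Dg) (i q : ℕ) : Prop := lRow D i ≤ (q : ℕ∞) ∧ (q : ℕ∞) < lRow D (i - 1)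

/-- `D'` is the result of performing Step A on `D` at row `i`: for each column
`l_i ≤ q < l_{i-1}`, membership of `(i, q)` and `(i-1, q)` is exchanged. -/
def IsStepA (D D' : Dg) (i : ℕ) : Prop :=
  ∀ p q : ℕ,
    (p = i → InL D i q → ((p, q) ∈ D' ↔ (i - 1, q) ∈ D)) ∧
    (p = i - 1 → InL D i q → ((p, q) ∈ D' ↔ (i, q) ∈ D)) ∧
    (¬((p = i ∨ p = i - 1) ∧ InL D i q) → ((p, q) ∈ D' ↔ (p, q) ∈ D))

/-- Step B is permitted at row `i`: `l_{i-1} > l_i` and `r_i ≤ r_{i-1} - 1`. -/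
def StepBOk (D : Dg) (i : ℕ) : Prop :=
  Violation D i ∧ rRow D i ≤ rRow D (i - 1) - 1

/-- The rows affected by Step B at row `i`: rows `p ≥ i` with `l_p = l_i`. -/
def BRow (D : Dg) (i p : ℕ) : Prop := i ≤ p ∧ lRow D p = lRow D i

/-- `D'` is the result of performing Step B on `D` at row `i`: in each row `p ≥ i` with
`l_p = l_i`, the box `(p, l_p)` is removed and the box `(p, r_p + 1)` is added. -/
def IsStepB (D D' : Dg) (i : ℕ) : Prop :=
  ∀ p q : ℕ,
    (BRow D i p →
      ((p, q) ∈ D' ↔ (((p, q) ∈ D ∧ (q : ℕ∞) ≠ lRow D p) ∨ q = rRow D p + 1))) ∧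
    (¬ BRow D i p → ((p, q) ∈ D' ↔ (p, q) ∈ D))

/-- One step of Algorithm 1: at the maximum index `i` with `l_{i-1} > l_i`, perform a
permitted Step A or Step B. -/
def AlgStep (D D' : Dg) : Prop :=
  ∃ i, MaxViolation D i ∧ ((StepAOk D i ∧ IsStepA D D' i) ∨ (StepBOk D i ∧ IsStepB D D' i))

/-- An execution of Algorithm 1 starting from `D0`: a finite sequence of diagrams beginning
at `D0`, each obtained from the previous by a step of Algorithm 1, ending at a terminal
diagram. -/
def IsExec (D0 : Dg) (L : List Dg) : Prop :=
  L.head? = some D0 ∧ L.Chain' AlgStep ∧ ∀ Dl, L.getLast? = some Dl → TerminalD Dl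

/-- The indices of nonempty rows of `D`, from top to bottom. -/
def rowIdx (D : Dg) : List ℕ := (D.image Prod.fst).sort (· ≤ ·)

/-- The lengths of the nonempty rows of `D`, read from top to bottom. -/
def rowLengths (D : Dg) : List ℕ := (rowIdx D).map (fun p => (row D p).card)

/-- The execution `L` terminates at a diagram whose nonempty rows, read from top to bottom,
have lengths `ν 1, ν 2, …`. -/
def EndsAt (L : List Dg) (ν : ℕ → ℕ) : Prop :=
  ∃ Dl, L.getLast? = some Dl ∧ ∀ m : ℕ, (rowLengths Dl).getD m 0 = ν (m + 1)

/-- A partition, written as a weakly decreasing function on indices `1, 2, …`. -/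
def IsPartition (f : ℕ → ℕ) : Prop := f 0 = 0 ∧ ∀ p, 1 ≤ p → f (p + 1) ≤ f p

/-- The partition `f` is contained in the `k × w` rectangle. -/
def InRect (f : ℕ → ℕ) (k w : ℕ) : Prop := (∀ p, k < p → f p = 0) ∧ ∀ p, f p ≤ w

/-- The skew Young diagram `lam / mu` (boxes of `lam` not in `mu`), rows `1, …, k`. -/
def skewD (lam mu : ℕ → ℕ) (k : ℕ) : Dg :=
  (Finset.Icc 1 k).biUnion (fun p => (Finset.Icc (mu p + 1) (lam p)).image (fun q => (p, q)))

/-- `lam^∨`, the complementary partition of `lam` inside the `k × w` rectangle. -/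
def dualP (lam : ℕ → ℕ) (k w : ℕ) : ℕ → ℕ :=
  fun p => if 1 ≤ p ∧ p ≤ k then w - lam (k + 1 - p) else 0

/-- `D` is row convex. -/
def RowConvex (D : Dg) : Prop :=
  ∀ i j j' j'', (i, j) ∈ D → (i, j') ∈ D → j ≤ j'' → j'' ≤ j' → (i, j'') ∈ D

/-- `l` is weakly increasing on positions `s, s+1, …, t`. -/
def MonoL (l : ℕ → ℕ∞) (s t : ℕ) : Prop := ∀ p q, s ≤ p → p ≤ q → q ≤ t → l p ≤ l q

/-- `l` is weakly decreasing on positions `s, s+1, …, t`. -/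
def AntiL (l : ℕ → ℕ∞) (s t : ℕ) : Prop := ∀ p q, s ≤ p → p ≤ q → q ≤ t → l q ≤ l p

/-- The sequence `(l_1, …, l_k)` of leftmost column indices of `D` has, for some indices
`1 ≤ a ≤ i ≤ k`, either the form `l_i ≤ l_{i+1} ≤ … ≤ l_k ≤ l_{i-1} ≤ l_{i-2} ≤ … ≤ l_1`,
or the form
`l_a ≤ … ≤ l_{i-2} ≤ l_i ≤ … ≤ l_k ≤ l_{i-1} ≤ l_{a-1} ≤ … ≤ l_1`. -/
def LShape (D : Dg) (k : ℕ) : Prop :=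
  ∃ a i, 1 ≤ a ∧ a ≤ i ∧ i ≤ k ∧
    ((MonoL (lRow D) i k ∧ (2 ≤ i → lRow D k ≤ lRow D (i - 1)) ∧ AntiL (lRow D) 1 (i - 1)) ∨
     (2 ≤ i ∧ MonoL (lRow D) a (i - 2) ∧ (a ≤ i - 2 → lRow D (i - 2) ≤ lRow D i) ∧
      MonoL (lRow D) i k ∧ lRow D k ≤ lRow D (i - 1) ∧
      (2 ≤ a → lRow D (i - 1) ≤ lRow D (a - 1)) ∧ AntiL (lRow D) 1 (a - 1)))

/-- `D` is almost skew with nonempty rows exactly `1, …, k`: it is row convex, its `r_i`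
are weakly decreasing, and its `l_i` satisfy one of the two inequality chains above. -/
def AlmostSkew (D : Dg) (k : ℕ) : Prop :=
  (∀ p, (row D p).Nonempty ↔ 1 ≤ p ∧ p ≤ k) ∧
  RowConvex D ∧
  (∀ p q, 1 ≤ p → p ≤ q → q ≤ k → rRow D q ≤ rRow D p) ∧
  LShape D k

/-- The sum `Σ σ` over all permutations preserving the value of `g` (e.g. the row or the
column of every box), in the group algebra `ℂ[Perm α]`. -/
noncomputable def Rsum {α : Type} [Fintype α] [DecidableEq α] (g : α → ℕ) :
    MonoidAlgebra ℂ (Equiv.Perm α) :=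
  ∑ σ ∈ Finset.univ.filter (fun σ : Equiv.Perm α => ∀ b, g (σ b) = g b),
    MonoidAlgebra.single σ 1

/-- The signed sum `Σ sgn(σ)·σ` over all permutations preserving the value of `g`, in the
group algebra `ℂ[Perm α]`. -/
noncomputable def Csum {α : Type} [Fintype α] [DecidableEq α] (g : α → ℕ) :
    MonoidAlgebra ℂ (Equiv.Perm α) :=
  ∑ σ ∈ Finset.univ.filter (fun σ : Equiv.Perm α => ∀ b, g (σ b) = g b),
    MonoidAlgebra.single σ ((Equiv.Perm.sign σ : ℤ) : ℂ)

section Alg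
variable {α : Type} [Fintype α] [DecidableEq α]

lemma Rsum_congr (g g' : α → ℕ) (h : ∀ σ : Equiv.Perm α, (∀ b, g (σ b) = g b) ↔ (∀ b, g' (σ b) = g' b)) :
    Rsum g = Rsum g' := by
  unfold Rsum; congr 1; ext σ
  simp only [Finset.mem_filter, Finset.mem_univ, true_and]
  exact h σ

lemma Csum_congr (g g' : α → ℕ) (h : ∀ σ : Equiv.Perm α, (∀ b, g (σ b) = g b) ↔ (∀ b, g' (σ b) = g' b)) :
    Csum g = Csum g' := by
  unfold Csum; congr 1; ext σ
  simp only [Finset.mem_filter, Finset.mem_univ, true_and]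
  exact h σ

lemma Rsum_comp_inj (g : α → ℕ) (η : ℕ → ℕ) (hη : Function.Injective η) :
    Rsum (fun b => η (g b)) = Rsum g :=
  Rsum_congr _ _ (fun _ => forall_congr' (fun _ => ⟨fun h => hη h, fun h => congrArg η h⟩))

lemma Csum_comp_inj (g : α → ℕ) (η : ℕ → ℕ) (hη : Function.Injective η) :
    Csum (fun b => η (g b)) = Csum g :=
  Csum_congr _ _ (fun _ => forall_congr' (fun _ => ⟨fun h => hη h, fun h => congrArg η h⟩))

lemma conj_sum_aux (g : α → ℕ) (τ : Equiv.Perm α)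
    (f : Equiv.Perm α → ℂ) (hf : ∀ σ, f (τ⁻¹ * σ * τ) = f σ) :
    ∑ σ ∈ Finset.univ.filter (fun σ : Equiv.Perm α => ∀ b, g (τ (σ b)) = g (τ b)),
      MonoidAlgebra.single σ (f σ) =
    MonoidAlgebra.single τ⁻¹ (1:ℂ) *
      (∑ σ ∈ Finset.univ.filter (fun σ : Equiv.Perm α => ∀ b, g (σ b) = g b),
        MonoidAlgebra.single σ (f σ)) * MonoidAlgebra.single τ (1:ℂ) := by
  rw [Finset.mul_sum, Finset.sum_mul]
  refine Finset.sum_nbij' (fun σ => τ * σ * τ⁻¹) (fun σ => τ⁻¹ * σ * τ) ?_ ?_ ?_ ?_ ?_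
  · intro σ hσ
    simp only [Finset.mem_filter, Finset.mem_univ, true_and] at hσ ⊢
    intro b
    simpa [Equiv.Perm.mul_apply] using hσ (τ⁻¹ b)
  · intro σ hσ
    simp only [Finset.mem_filter, Finset.mem_univ, true_and] at hσ ⊢
    intro b
    simpa [Equiv.Perm.mul_apply] using hσ (τ b)
  · intro σ _; group
  · intro σ _; group
  · intro σ _
    rw [MonoidAlgebra.single_mul_single, MonoidAlgebra.single_mul_single, one_mul, mul_one]
    congr 1
    · group
    · rw [← hf (τ * σ * τ⁻¹)]; congr 1; group

lemma Rsum_comp_perm (g : α → ℕ) (τ : Equiv.Perm α) :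
    Rsum (fun b => g (τ b)) =
      MonoidAlgebra.single τ⁻¹ (1:ℂ) * Rsum g * MonoidAlgebra.single τ (1:ℂ) :=
  conj_sum_aux g τ (fun _ => 1) (fun _ => rfl)

lemma Csum_comp_perm (g : α → ℕ) (τ : Equiv.Perm α) :
    Csum (fun b => g (τ b)) =
      MonoidAlgebra.single τ⁻¹ (1:ℂ) * Csum g * MonoidAlgebra.single τ (1:ℂ) := by
  refine conj_sum_aux g τ (fun σ => ((Equiv.Perm.sign σ : ℤ) : ℂ)) (fun σ => ?_)
  simp only [Equiv.Perm.sign_mul, Equiv.Perm.sign_inv]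
  rcases Int.units_eq_one_or (Equiv.Perm.sign σ) with h | h <;>
    rcases Int.units_eq_one_or (Equiv.Perm.sign τ) with h' | h' <;>
      simp [h, h']

lemma span_singleton_mul_unit_equiv {R : Type*} [Ring R] (u : R) (T T' : R)
    (hTT' : T * T' = 1) (hT'T : T' * T = 1) :
    Nonempty ((Submodule.span R {u * T}) ≃ₗ[R] (Submodule.span R {u})) := by
  refine ⟨{
    toFun := fun x => ⟨x.1 * T', ?_⟩
    map_add' := ?_
    map_smul' := ?_
    invFun := fun y => ⟨y.1 * T, ?_⟩
    left_inv := ?_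
    right_inv := ?_ }⟩
  · obtain ⟨a, ha⟩ := Submodule.mem_span_singleton.1 x.2
    refine Submodule.mem_span_singleton.2 ⟨a, ?_⟩
    rw [← ha]
    simp only [smul_eq_mul]
    rw [mul_assoc, mul_assoc, hTT', mul_one]
  · intro x y; ext; simp [add_mul]
  · intro a x; ext; simp [mul_assoc]
  · obtain ⟨a, ha⟩ := Submodule.mem_span_singleton.1 y.2
    refine Submodule.mem_span_singleton.2 ⟨a, ?_⟩
    rw [← ha]; simp only [smul_eq_mul]; rw [mul_assoc]
  · intro x; ext; simp only; rw [mul_assoc, hT'T, mul_one]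
  · intro y; ext; simp only; rw [mul_assoc, hTT', mul_one]

lemma span_unit_mul_eq {R : Type*} [Ring R] (u : R) (T T' : R)
    (hTT' : T * T' = 1) :
    Submodule.span R {T' * u} = Submodule.span R ({u} : Set R) := by
  apply le_antisymm
  · rw [Submodule.span_le, Set.singleton_subset_iff]
    exact Submodule.smul_mem _ T' (Submodule.mem_span_singleton_self u)
  · rw [Submodule.span_le, Set.singleton_subset_iff]
    have h2 : T • (T' * u) = u := by rw [smul_eq_mul, ← mul_assoc, hTT', one_mul]
    have h3 : T • (T' * u) ∈ Submodule.span R {T' * u} :=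
      Submodule.smul_mem _ T (Submodule.mem_span_singleton_self _)
    rwa [h2] at h3

/-- Main algebraic reduction. -/
lemma specht_iso {α α' : Type} [Fintype α] [DecidableEq α] [Fintype α'] [DecidableEq α']
    (c r : α → ℕ) (c' r' : α' → ℕ) (φ β : α ≃ α') (ζ η : ℕ → ℕ)
    (hζ : Function.Injective ζ) (hη : Function.Injective η)
    (hc : ∀ b, c' (β b) = ζ (c b)) (hr : ∀ b, r' (β b) = η (r b))
    (cφ rφ : α → ℕ) (hcφ : cφ = fun b => c' (φ b)) (hrφ : rφ = fun b => r' (φ b)) :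
    Nonempty ((Submodule.span (MonoidAlgebra ℂ (Equiv.Perm α))
        {Csum cφ * Rsum rφ}) ≃ₗ[MonoidAlgebra ℂ (Equiv.Perm α)]
      (Submodule.span (MonoidAlgebra ℂ (Equiv.Perm α)) {Csum c * Rsum r})) := by
  subst hcφ
  subst hrφ
  set τ : Equiv.Perm α := φ.trans β.symm with hτ
  have hβτ : ∀ b, β (τ b) = φ b := fun b => by simp [hτ]
  have hcφ : ∀ b, c' (φ b) = ζ (c (τ b)) := fun b => by rw [← hβτ b, hc]
  have hrφ : ∀ b, r' (φ b) = η (r (τ b)) := fun b => by rw [← hβτ b, hr]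
  have h1 : Csum (fun b => c' (φ b)) = Csum (fun b => c (τ b)) := by
    have := Csum_comp_inj (fun b => c (τ b)) ζ hζ
    rw [← this]
    exact Csum_congr _ _ (fun σ => by simp only [hcφ])
  have h2 : Rsum (fun b => r' (φ b)) = Rsum (fun b => r (τ b)) := by
    have := Rsum_comp_inj (fun b => r (τ b)) η hη
    rw [← this]
    exact Rsum_congr _ _ (fun σ => by simp only [hrφ])
  rw [h1, h2, Csum_comp_perm, Rsum_comp_perm]
  set T := MonoidAlgebra.single τ (1:ℂ) with hT
  set T' := MonoidAlgebra.single τ⁻¹ (1:ℂ) with hT'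
  have hTT' : T * T' = 1 := by
    rw [hT, hT', MonoidAlgebra.single_mul_single, mul_inv_cancel, mul_one, MonoidAlgebra.one_def]
  have hT'T : T' * T = 1 := by
    rw [hT, hT', MonoidAlgebra.single_mul_single, inv_mul_cancel, mul_one, MonoidAlgebra.one_def]
  have e1 : T' * Csum c * T * (T' * Rsum r * T) = T' * (Csum c * Rsum r) * T := by
    have key : T * (T' * (Rsum r * T)) = Rsum r * T := by
      rw [← mul_assoc T T', hTT', one_mul]
    simp only [mul_assoc]
    rw [key]
  rw [e1, mul_assoc]
  rw [span_unit_mul_eq (Csum c * Rsum r * T) T T' hTT']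
  exact span_singleton_mul_unit_equiv _ T T' hTT' hT'T

end Alg


set_option linter.unusedSectionVars false

section DiagramLemmas
lemma mem_row_iff {D : Dg} {p q : ℕ} : q ∈ row D p ↔ (p, q) ∈ D := by
  simp only [row, Finset.mem_image, Finset.mem_filter]
  constructor
  · rintro ⟨⟨a, b⟩, ⟨hab, h1⟩, h2⟩
    simp only at h1 h2
    subst h1; subst h2; exact hab
  · intro h; exact ⟨(p, q), ⟨h, rfl⟩, rfl⟩

lemma lRow_le {D : Dg} {p q : ℕ} (h : (p, q) ∈ D) : lRow D p ≤ (q : ℕ∞) :=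
  Finset.inf_le (mem_row_iff.2 h)

lemma le_rRow {D : Dg} {p q : ℕ} (h : (p, q) ∈ D) : q ≤ rRow D p :=
  Finset.le_sup (f := id) (mem_row_iff.2 h)

lemma lRow_attained {D : Dg} {p : ℕ} (h : (row D p).Nonempty) :
    ∃ j : ℕ, lRow D p = (j : ℕ∞) ∧ (p, j) ∈ D := by
  obtain ⟨j, hj, hje⟩ := Finset.exists_mem_eq_inf (row D p) h (fun j => (j : ℕ∞))
  exact ⟨j, hje, mem_row_iff.1 hj⟩

lemma rRow_attained {D : Dg} {p : ℕ} (h : (row D p).Nonempty) : (p, rRow D p) ∈ D := by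
  obtain ⟨j, hj, hje⟩ := Finset.exists_mem_eq_sup (row D p) h id
  rw [rRow, hje]; exact mem_row_iff.1 hj

lemma row_nonempty_of_mem {D : Dg} {p q : ℕ} (h : (p, q) ∈ D) : (row D p).Nonempty :=
  ⟨q, mem_row_iff.2 h⟩

lemma lRow_ne_top_iff {D : Dg} {p : ℕ} : lRow D p ≠ ⊤ ↔ (row D p).Nonempty := by
  constructor
  · intro h
    by_contra hne
    rw [Finset.not_nonempty_iff_eq_empty] at hne
    rw [lRow, hne] at h; simp at h
  · intro h
    obtain ⟨j, hje, _⟩ := lRow_attained h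
    rw [hje]; exact (WithTop.coe_ne_top)

lemma exists_matching : ∀ (n : ℕ) (s t : Finset ℕ) (f f' : ℕ → ℕ), s.card = n → t.card = n →
    (∀ v, (s.filter (fun c => f c = v)).card = (t.filter (fun c => f' c = v)).card) →
    ∃ g : ℕ → ℕ, Set.MapsTo g s t ∧ Set.InjOn g s ∧ Set.SurjOn g s t ∧
      ∀ c ∈ s, f' (g c) = f c := by
  intro n
  induction n with
  | zero =>
    intro s t f f' hs ht _
    rw [Finset.card_eq_zero] at hs ht
    subst hs; subst ht
    exact ⟨id, by simp [Set.MapsTo], by simp [Set.InjOn], by simp [Set.SurjOn], by simp⟩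
  | succ n ih =>
    intro s t f f' hs ht hcount
    have hsne : s.Nonempty := Finset.card_pos.1 (by omega)
    obtain ⟨c₀, hc₀⟩ := hsne
    have h1 : c₀ ∈ s.filter (fun c => f c = f c₀) := Finset.mem_filter.2 ⟨hc₀, rfl⟩
    have h2 : (t.filter (fun c => f' c = f c₀)).Nonempty := by
      rw [← Finset.card_pos, ← hcount]
      exact Finset.card_pos.2 ⟨c₀, h1⟩
    obtain ⟨c₁, hc₁⟩ := h2
    rw [Finset.mem_filter] at hc₁
    obtain ⟨hc₁t, hfc₁⟩ := hc₁
    have hcount' : ∀ v, ((s.erase c₀).filter (fun c => f c = v)).card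
        = ((t.erase c₁).filter (fun c => f' c = v)).card := by
      intro v
      rw [Finset.filter_erase, Finset.filter_erase]
      by_cases hv : v = f c₀
      · subst hv
        have hm : c₁ ∈ t.filter (fun c => f' c = f c₀) := Finset.mem_filter.2 ⟨hc₁t, hfc₁⟩
        rw [Finset.card_erase_of_mem h1, Finset.card_erase_of_mem hm, hcount]
      · rw [Finset.erase_eq_of_notMem, Finset.erase_eq_of_notMem]
        · exact hcount v
        · intro hc; exact hv (by rw [← (Finset.mem_filter.1 hc).2, hfc₁])
        · intro hc; exact hv ((Finset.mem_filter.1 hc).2).symm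
    obtain ⟨g₀, hmap, hinj, hsurj, hval⟩ := ih (s.erase c₀) (t.erase c₁) f f'
      (by rw [Finset.card_erase_of_mem hc₀, hs]; omega)
      (by rw [Finset.card_erase_of_mem hc₁t, ht]; omega) hcount'
    classical
    refine ⟨fun c => if c = c₀ then c₁ else g₀ c, ?_, ?_, ?_, ?_⟩
    · intro c hc
      simp only [Finset.coe_insert, Set.mem_insert_iff, Finset.mem_coe] at hc
      by_cases h : c = c₀
      · simp [h, hc₁t]
      · simp only [h, if_false]
        exact Finset.mem_of_mem_erase (hmap (Finset.mem_coe.2 (Finset.mem_erase.2 ⟨h, hc⟩)))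
    · intro a ha b hb hab
      simp only [Finset.mem_coe] at ha hb
      by_cases h1' : a = c₀ <;> by_cases h2' : b = c₀
      · rw [h1', h2']
      · simp only [h1', h2', if_true, if_false] at hab
        have := hmap (Finset.mem_coe.2 (Finset.mem_erase.2 ⟨h2', hb⟩))
        rw [← hab] at this
        exact absurd (Finset.mem_coe.1 this) (fun hh => (Finset.mem_erase.1 hh).1 rfl)
      · simp only [h1', h2', if_true, if_false] at hab
        have := hmap (Finset.mem_coe.2 (Finset.mem_erase.2 ⟨h1', ha⟩))
        rw [hab] at this
        exact absurd (Finset.mem_coe.1 this) (fun hh => (Finset.mem_erase.1 hh).1 rfl)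
      · simp only [h1', h2', if_false] at hab
        exact hinj (Finset.mem_coe.2 (Finset.mem_erase.2 ⟨h1', ha⟩))
          (Finset.mem_coe.2 (Finset.mem_erase.2 ⟨h2', hb⟩)) hab
    · intro d hd
      simp only [Finset.mem_coe] at hd
      by_cases h : d = c₁
      · exact ⟨c₀, Finset.mem_coe.2 hc₀, by simp [h]⟩
      · obtain ⟨c, hc, hgc⟩ := hsurj (Finset.mem_coe.2 (Finset.mem_erase.2 ⟨h, hd⟩))
        simp only [Finset.mem_coe, Finset.mem_erase] at hc
        exact ⟨c, Finset.mem_coe.2 hc.2, by simp only [hc.1, if_false]; exact hgc⟩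
    · intro c hc
      by_cases h : c = c₀
      · simp only [h, if_true]
        rw [hfc₁]
      · simp only [h, if_false]
        exact hval c (Finset.mem_erase.2 ⟨h, hc⟩)

lemma prefix_finset {i : ℕ} (hi : 1 ≤ i) (s : Finset ℕ) (hs : ∀ p ∈ s, i ≤ p)
    (hdc : ∀ p p', i ≤ p' → p' ≤ p → p ∈ s → p' ∈ s) : s = Finset.Icc i (s.sup id) := by
  ext p
  simp only [Finset.mem_Icc]
  constructor
  · intro hp
    exact ⟨hs p hp, Finset.le_sup (f := id) hp⟩
  · rintro ⟨h1, h2⟩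
    rcases Finset.eq_empty_or_nonempty s with he | hne
    · subst he
      rw [Finset.sup_empty] at h2
      have : p = 0 := Nat.le_zero.1 h2
      omega
    · obtain ⟨b, hb, hbe⟩ := Finset.exists_mem_eq_sup s hne id
      exact hdc b p h1 (by rw [hbe] at h2; exact h2) hb


section Comb
variable {D : Dg} {k i : ℕ} (hAS : AlmostSkew D k) (hmax : MaxViolation D i)

include hAS

/-- interval characterization of membership -/
lemma mem_char {p : ℕ} (hp1 : 1 ≤ p) (hpk : p ≤ k) (q : ℕ) :
    (p, q) ∈ D ↔ (lRow D p ≤ (q : ℕ∞) ∧ q ≤ rRow D p) := by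
  constructor
  · exact fun h => ⟨lRow_le h, le_rRow h⟩
  · rintro ⟨h1, h2⟩
    have hne : (row D p).Nonempty := (hAS.1 p).2 ⟨hp1, hpk⟩
    obtain ⟨j, hje, hjD⟩ := lRow_attained hne
    have hjq : j ≤ q := by rwa [hje, Nat.cast_le] at h1
    exact hAS.2.1 p j (rRow D p) q hjD (rRow_attained hne) hjq h2

lemma row_eq_Icc {p : ℕ} (hp1 : 1 ≤ p) (hpk : p ≤ k) {j : ℕ} (hj : lRow D p = (j:ℕ∞)) :
    row D p = Finset.Icc j (rRow D p) := by
  ext q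
  rw [mem_row_iff, mem_char hAS hp1 hpk, Finset.mem_Icc, hj, Nat.cast_le]

include hmax

lemma viol : Violation D i := hmax.1
lemma two_le_i : 2 ≤ i := hmax.1.1

lemma i_le_k : i ≤ k := by
  have h := hmax.1.2
  have : lRow D i ≠ ⊤ := (lt_of_lt_of_le h le_top).ne
  exact ((hAS.1 i).1 (lRow_ne_top_iff.1 this)).2

lemma i1_bounds : 1 ≤ i - 1 ∧ i - 1 ≤ k := by
  have h2 := two_le_i hAS hmax
  have hk := i_le_k hAS hmax
  omega

lemma row_i1_nonempty : (row D (i-1)).Nonempty := by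
  obtain ⟨h1, h2⟩ := i1_bounds hAS hmax
  exact (hAS.1 _).2 ⟨h1, h2⟩

lemma row_i_nonempty : (row D i).Nonempty := by
  have h2 := two_le_i hAS hmax
  have hk := i_le_k hAS hmax
  exact (hAS.1 _).2 ⟨by omega, hk⟩

/-- l is monotone from i on -/
lemma lmono : ∀ p q, i ≤ p → p ≤ q → lRow D p ≤ lRow D q := by
  have step : ∀ p, i ≤ p → lRow D p ≤ lRow D (p + 1) := by
    intro p hp
    by_contra hlt
    push_neg at hlt
    have hv : Violation D (p + 1) := ⟨by have := two_le_i hAS hmax; omega, by simpa using hlt⟩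
    have := hmax.2 _ hv
    omega
  intro p q hip hpq
  induction q, hpq using Nat.le_induction with
  | base => exact le_refl _
  | succ n hn ih => exact le_trans ih (step n (le_trans hip hn))

set_option linter.unusedSectionVars false

lemma lshape_core : ∀ p, 1 ≤ p → p < i → lRow D p < lRow D (i-1) → lRow D p ≤ lRow D i := by
  intro p hp1 hpi hplt
  set l := lRow D with hl
  have hv : l i < l (i-1) := hmax.1.2
  have h2 : 2 ≤ i := two_le_i hAS hmax
  have hk : i ≤ k := i_le_k hAS hmax
  obtain ⟨a, i₀, ha1, hai, hi0k, hcase⟩ := hAS.2.2.2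
  rcases hcase with ⟨mono, _, anti⟩ | ⟨h2i0, mono1, hbridge, mono2, hki1, hbridge2, anti⟩
  · have hii0 : i ≤ i₀ := by
      by_contra hc
      push_neg at hc
      exact absurd (mono (i-1) i (by omega) (by omega) hk) (not_le.2 hv)
    exact absurd (anti p (i-1) hp1 (by omega) (by omega)) (not_le.2 hplt)
  · have hii0 : i ≤ i₀ := by
      by_contra hc
      push_neg at hc
      exact absurd (mono2 (i-1) i (by omega) (by omega) hk) (not_le.2 hv)
    rcases eq_or_lt_of_le hii0 with heq | hlt2
    · -- i = i₀
      by_cases hpa : p ≤ a - 1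
      · have ha2 : 2 ≤ a := by omega
        have h1 : l (a-1) ≤ l p := anti p (a-1) hp1 hpa (le_refl _)
        have h2' : l (i₀-1) ≤ l (a-1) := hbridge2 ha2
        rw [← heq] at h2'
        exact absurd (le_trans h2' h1) (not_le.2 hplt)
      · push_neg at hpa
        have hap : a ≤ p := by omega
        rcases eq_or_lt_of_le (show p ≤ i - 1 by omega) with hpe | hpe
        · rw [hpe] at hplt; exact absurd hplt (lt_irrefl _)
        · have hpi2 : p ≤ i₀ - 2 := by omega
          have h1 : l p ≤ l (i₀-2) := mono1 p (i₀-2) hap hpi2 (le_refl _)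
          have h2' : l (i₀-2) ≤ l i₀ := hbridge (by omega)
          rw [← heq] at h1 h2'
          exact le_trans h1 h2'
    · -- i < i₀
      have hia : i ≤ a := by
        by_contra hc
        push_neg at hc
        by_cases hii : i ≤ i₀ - 2
        · exact absurd (mono1 (i-1) i (by omega) (by omega) hii) (not_le.2 hv)
        · have hie : i = i₀ - 1 := by omega
          have c1 : l (i₀-2) ≤ l i₀ := hbridge (by omega)
          have c2 : l i₀ ≤ l k := mono2 i₀ k (le_refl _) hi0k (le_refl _)
          have c3 : l k ≤ l (i₀-1) := hki1
          have : l (i₀-2) ≤ l (i₀-1) := le_trans c1 (le_trans c2 c3)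
          rw [← hie] at this
          have : l (i - 1) ≤ l i := by
            have : i - 1 = i₀ - 2 := by omega
            rw [this, hie] at hv ⊢
            exact (le_trans c1 (le_trans c2 c3))
          exact absurd this (not_le.2 hv)
      exact absurd (anti p (i-1) hp1 (by omega) (by omega)) (not_le.2 hplt)

lemma stepA_beta (DA : Dg) (hA : StepAOk D i) (hnB : ¬ StepBOk D i) (hDA : IsStepA D DA i) :
    ∃ (β : {x : ℕ×ℕ // x ∈ D} ≃ {x : ℕ×ℕ // x ∈ DA}) (η : ℕ → ℕ), Function.Injective η ∧
      (∀ b, (β b).val.2 = b.val.2) ∧ (∀ b, (β b).val.1 = η b.val.1) := by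
  classical
  have h2 : 2 ≤ i := two_le_i hAS hmax
  have hk : i ≤ k := i_le_k hAS hmax
  obtain ⟨li, hli, hliD⟩ := lRow_attained (row_i_nonempty hAS hmax)
  obtain ⟨li1, hli1, hli1D⟩ := lRow_attained (row_i1_nonempty hAS hmax)
  have hlt : li < li1 := by
    have := hmax.1.2
    rw [hli, hli1, Nat.cast_lt] at this
    exact this
  set r := rRow D i with hr
  have req : rRow D (i-1) = r := by
    have h1 : rRow D i ≤ rRow D (i-1) := hAS.2.2.1 (i-1) i (by omega) (by omega) hk
    have h2' : ¬ (rRow D i ≤ rRow D (i-1) - 1) := fun hc => hnB ⟨hmax.1, hc⟩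
    omega
  have hr1 : li1 ≤ r + 1 := by
    rcases hA.2 with h | h
    · rw [hli1] at h
      have h1 : ((li1 - 1 : ℕ) : ℕ∞) ≤ ((r : ℕ) : ℕ∞) := by
        rw [ENat.coe_sub, Nat.cast_one]
        exact h
      rw [Nat.cast_le] at h1
      omega
    · exact absurd h (Finset.Nonempty.ne_empty (row_i1_nonempty hAS hmax))
  have hInL : ∀ q, InL D i q ↔ (li ≤ q ∧ q < li1) := by
    intro q
    rw [InL, hli, hli1, Nat.cast_le, Nat.cast_lt]
  have hmemi : ∀ q, ((i, q) ∈ D ↔ (li ≤ q ∧ q ≤ r)) := by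
    intro q
    rw [mem_char hAS (by omega) hk, hli, Nat.cast_le, hr]
  have hmemi1 : ∀ q, ((i-1, q) ∈ D ↔ (li1 ≤ q ∧ q ≤ r)) := by
    intro q
    rw [mem_char hAS (by omega) (by omega), hli1, Nat.cast_le, req]
  set σA : ℕ → ℕ := fun p => if p = i then i - 1 else if p = i - 1 then i else p with hσA
  have hσσ : ∀ p, σA (σA p) = p := by
    intro p
    simp only [hσA]
    split_ifs <;> omega
  have hmem : ∀ p q, ((p, q) ∈ DA ↔ (σA p, q) ∈ D) := by
    intro p q
    obtain ⟨c1, c2, c3⟩ := hDA p q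
    by_cases hpi : p = i
    · have hσ : σA p = i - 1 := by simp [hσA, hpi]
      rw [hσ]
      by_cases hq : InL D i q
      · exact c1 hpi hq
      · rw [c3 (fun hc => hq hc.2), hpi]
        rw [hInL] at hq
        push_neg at hq
        constructor
        · intro hD
          obtain ⟨ha, hb⟩ := (hmemi q).1 hD
          exact (hmemi1 q).2 ⟨hq ha, hb⟩
        · intro hD
          obtain ⟨ha, hb⟩ := (hmemi1 q).1 hD
          exact (hmemi q).2 ⟨by omega, hb⟩
    · by_cases hpi1 : p = i - 1
      · have hσ : σA p = i := by simp only [hσA, hpi1]; split_ifs <;> omega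
        rw [hσ]
        by_cases hq : InL D i q
        · exact c2 hpi1 hq
        · rw [c3 (fun hc => hq hc.2), hpi1]
          rw [hInL] at hq
          push_neg at hq
          constructor
          · intro hD
            obtain ⟨ha, hb⟩ := (hmemi1 q).1 hD
            exact (hmemi q).2 ⟨by omega, hb⟩
          · intro hD
            obtain ⟨ha, hb⟩ := (hmemi q).1 hD
            exact (hmemi1 q).2 ⟨hq ha, hb⟩
      · have hσ : σA p = p := by simp only [hσA]; split_ifs <;> omega
        rw [hσ]
        exact c3 (fun hc => by rcases hc.1 with h | h <;> [exact hpi h; exact hpi1 h])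
  refine ⟨⟨fun b => ⟨(σA b.1.1, b.1.2), ?_⟩, fun b => ⟨(σA b.1.1, b.1.2), ?_⟩, ?_, ?_⟩,
      σA, ?_, fun b => rfl, fun b => rfl⟩
  · rw [hmem, hσσ]
    exact b.2
  · exact (hmem b.1.1 b.1.2).1 b.2
  · intro b; ext <;> simp [hσσ]
  · intro b; ext <;> simp [hσσ]
  · intro x y hxy
    have := congrArg σA hxy
    rwa [hσσ, hσσ] at this

lemma stepB_beta (DB : Dg) (hB : StepBOk D i) (hnA : ¬ StepAOk D i) (hDB : IsStepB D DB i) :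
    ∃ (β : {x : ℕ×ℕ // x ∈ D} ≃ {x : ℕ×ℕ // x ∈ DB}) (ζ : ℕ → ℕ), Function.Injective ζ ∧
      (∀ b, (β b).val.1 = b.val.1) ∧ (∀ b, (β b).val.2 = ζ b.val.2) := by
  classical
  have h2 : 2 ≤ i := two_le_i hAS hmax
  have hk : i ≤ k := i_le_k hAS hmax
  obtain ⟨li, hli, hliD⟩ := lRow_attained (row_i_nonempty hAS hmax)
  obtain ⟨li1, hli1, hli1D⟩ := lRow_attained (row_i1_nonempty hAS hmax)
  have hlt : li < li1 := by
    have := hmax.1.2; rw [hli, hli1, Nat.cast_lt] at this; exact this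
  set r := rRow D i with hrdef
  have hlir : li ≤ r := le_rRow hliD
  have hgap : r + 2 ≤ li1 := by
    have hd : ¬ (lRow D (i-1) - 1 ≤ ((rRow D i : ℕ) : ℕ∞) ∨ row D (i - 1) = ∅) :=
      fun hc => hnA ⟨hmax.1, hc⟩
    push_neg at hd
    have h1 := hd.1
    rw [hli1, ← Nat.cast_one, ← ENat.coe_sub, Nat.cast_lt] at h1
    omega
  have hri1 : r + 1 ≤ rRow D (i-1) := by
    have h1 := hB.2
    have h2' : li1 ≤ rRow D (i-1) := le_rRow hli1D
    omega
  set I : Finset ℕ := Finset.Icc li (r+1) with hI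
  -- basic row facts
  have rowne : ∀ p, 1 ≤ p → p ≤ k → (row D p).Nonempty := fun p h1 h2 => (hAS.1 p).2 ⟨h1, h2⟩
  have hle_k : ∀ p q, (p, q) ∈ D → p ≤ k := fun p q h => ((hAS.1 p).1 ⟨q, mem_row_iff.2 h⟩).2
  have hge_1 : ∀ p q, (p, q) ∈ D → 1 ≤ p := fun p q h => ((hAS.1 p).1 ⟨q, mem_row_iff.2 h⟩).1
  have hrb : ∀ p, i ≤ p → p ≤ k → rRow D p ≤ r := fun p h1 h2 =>
    hAS.2.2.1 i p (by omega) h1 h2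
  have hlb : ∀ p, i ≤ p → (li : ℕ∞) ≤ lRow D p := fun p h1 => by
    rw [← hli]; exact lmono hAS hmax i p (le_refl _) h1
  have hBk : ∀ p, BRow D i p → p ≤ k := by
    intro p hp
    have : lRow D p ≠ ⊤ := by rw [hp.2, hli]; exact WithTop.coe_ne_top
    exact ((hAS.1 p).1 (lRow_ne_top_iff.1 this)).2
  have hBdown : ∀ p p', i ≤ p' → p' ≤ p → BRow D i p → BRow D i p' := by
    intro p p' h1 h2 hp
    refine ⟨h1, le_antisymm ?_ ?_⟩
    · rw [← hp.2]; exact lmono hAS hmax p' p h1 h2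
    · exact lmono hAS hmax i p' (le_refl _) h1
  -- membership characterizations
  have memD : ∀ p q, i ≤ p → p ≤ k → ((p, q) ∈ D ↔ (lRow D p ≤ (q:ℕ∞) ∧ q ≤ rRow D p)) :=
    fun p q h1 h2 => mem_char hAS (by omega) h2 q
  have memB1 : ∀ p q, BRow D i p → ((p, q) ∈ DB ↔ (li + 1 ≤ q ∧ q ≤ rRow D p + 1)) := by
    intro p q hp
    have hpk := hBk p hp
    have hpi : i ≤ p := hp.1
    have hlp : lRow D p = (li : ℕ∞) := by rw [hp.2, hli]
    have hlirp : li ≤ rRow D p := by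
      have : (p, li) ∈ D := by
        rw [memD p li hp.1 hpk, hlp]
        refine ⟨le_refl _, ?_⟩
        obtain ⟨j, hj, hjD⟩ := lRow_attained (rowne p (by omega) hpk)
        have : j = li := by rw [hj] at hlp; exact_mod_cast hlp
        subst this
        exact le_rRow hjD
      exact le_rRow this
    rw [(hDB p q).1 hp, memD p q hp.1 hpk, hlp]
    constructor
    · rintro (⟨⟨ha, hb⟩, hne⟩ | he)
      · rw [Nat.cast_le] at ha
        have : q ≠ li := fun hc => hne (by rw [hc])
        omega
      · omega
    · rintro ⟨ha, hb⟩
      by_cases he : q = rRow D p + 1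
      · right; exact he
      · left
        refine ⟨⟨by rw [Nat.cast_le]; omega, by omega⟩, ?_⟩
        intro hc
        rw [Nat.cast_inj] at hc
        omega
  have memB2 : ∀ p q, ¬ BRow D i p → ((p, q) ∈ DB ↔ (p, q) ∈ D) := fun p q h => (hDB p q).2 h
  -- rows ≥ i of D sit inside I
  have hrowI : ∀ p q, i ≤ p → (p, q) ∈ D → q ∈ I := by
    intro p q h1 hq
    have hpk := hle_k p q hq
    have ha := lRow_le hq
    have hb := le_rRow hq
    have h3 : (li : ℕ∞) ≤ (q : ℕ∞) := le_trans (hlb p h1) ha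
    rw [Nat.cast_le] at h3
    have h4 : q ≤ r := le_trans hb (hrb p h1 hpk)
    rw [hI, Finset.mem_Icc]; omega
  have hrowIB : ∀ p q, i ≤ p → (p, q) ∈ DB → q ∈ I := by
    intro p q h1 hq
    by_cases hb : BRow D i p
    · have := (memB1 p q hb).1 hq
      have h4 : rRow D p ≤ r := hrb p h1 (hBk p hb)
      rw [hI, Finset.mem_Icc]; omega
    · exact hrowI p q h1 ((memB2 p q hb).1 hq)
  have hBle_k : ∀ p q, i ≤ p → (p, q) ∈ DB → p ≤ k := by
    intro p q h1 hq
    by_cases hb : BRow D i p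
    · exact hBk p hb
    · exact hle_k p q ((memB2 p q hb).1 hq)
  -- downward closure
  have dcD : ∀ p p' q, i ≤ p' → p' ≤ p → (p, q) ∈ D → (p', q) ∈ D := by
    intro p p' q h1 h2 hq
    have hpk := hle_k p q hq
    rw [memD p q (by omega) hpk] at hq
    rw [memD p' q h1 (by omega)]
    refine ⟨le_trans (lmono hAS hmax p' p h1 h2) hq.1, le_trans hq.2 ?_⟩
    exact hAS.2.2.1 p' p (by omega) h2 hpk
  have dcB : ∀ p p' q, i ≤ p' → p' ≤ p → (p, q) ∈ DB → (p', q) ∈ DB := by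
    intro p p' q h1 h2 hq
    by_cases hbp : BRow D i p
    · have hbp' : BRow D i p' := hBdown p p' h1 h2 hbp
      rw [memB1 p q hbp] at hq
      rw [memB1 p' q hbp']
      have : rRow D p ≤ rRow D p' := hAS.2.2.1 p' p (by omega) h2 (hBk p hbp)
      omega
    · rw [memB2 p q hbp] at hq
      have hpk := hle_k p q hq
      by_cases hbp' : BRow D i p'
      · rw [memB1 p' q hbp']
        have ha := lRow_le hq
        have hlpn : lRow D p ≠ (li : ℕ∞) := fun hc => hbp ⟨le_trans h1 h2, by rw [hc, hli]⟩
        have hlpge : (li : ℕ∞) ≤ lRow D p := hlb p (le_trans h1 h2)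
        obtain ⟨x, hx, hxD⟩ := lRow_attained (rowne p (by omega) hpk)
        rw [hx] at ha hlpn hlpge
        rw [Nat.cast_le] at ha hlpge
        have hxne : x ≠ li := fun hc => hlpn (by rw [hc])
        have hb := le_rRow hq
        have : rRow D p ≤ rRow D p' := hAS.2.2.1 p' p (by omega) h2 hpk
        omega
      · rw [memB2 p' q hbp']
        exact dcD p p' q h1 h2 hq
  -- the eD / eB functions
  set FD : ℕ → Finset ℕ := fun c => (Finset.Icc i k).filter (fun p => (p, c) ∈ D) with hFD
  set FB : ℕ → Finset ℕ := fun c => (Finset.Icc i k).filter (fun p => (p, c) ∈ DB) with hFB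
  set eD : ℕ → ℕ := fun c => (FD c).sup id with heD
  set eB : ℕ → ℕ := fun c => (FB c).sup id with heB
  have hFDpre : ∀ c, FD c = Finset.Icc i (eD c) := by
    intro c
    refine prefix_finset (i := i) (show 1 ≤ i by omega) _ ?_ ?_
    · intro p hp
      exact (Finset.mem_Icc.1 (Finset.mem_filter.1 hp).1).1
    · intro p p' h1 h2 hp
      obtain ⟨hp1, hp2⟩ := Finset.mem_filter.1 hp
      refine Finset.mem_filter.2 ⟨Finset.mem_Icc.2 ⟨h1, le_trans h2 (Finset.mem_Icc.1 hp1).2⟩, ?_⟩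
      exact dcD p p' c h1 h2 hp2
  have hFBpre : ∀ c, FB c = Finset.Icc i (eB c) := by
    intro c
    refine prefix_finset (i := i) (show 1 ≤ i by omega) _ ?_ ?_
    · intro p hp
      exact (Finset.mem_Icc.1 (Finset.mem_filter.1 hp).1).1
    · intro p p' h1 h2 hp
      obtain ⟨hp1, hp2⟩ := Finset.mem_filter.1 hp
      refine Finset.mem_filter.2 ⟨Finset.mem_Icc.2 ⟨h1, le_trans h2 (Finset.mem_Icc.1 hp1).2⟩, ?_⟩
      exact dcB p p' c h1 h2 hp2
  have memDhigh : ∀ c t, i ≤ t → ((t, c) ∈ D ↔ t ≤ eD c) := by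
    intro c t ht
    constructor
    · intro h
      have : t ∈ FD c := Finset.mem_filter.2 ⟨Finset.mem_Icc.2 ⟨ht, hle_k t c h⟩, h⟩
      exact Finset.le_sup (f := id) this
    · intro h
      have : t ∈ FD c := by rw [hFDpre c]; exact Finset.mem_Icc.2 ⟨ht, h⟩
      exact (Finset.mem_filter.1 this).2
  have memBhigh : ∀ c t, i ≤ t → ((t, c) ∈ DB ↔ t ≤ eB c) := by
    intro c t ht
    constructor
    · intro h
      have : t ∈ FB c := Finset.mem_filter.2 ⟨Finset.mem_Icc.2 ⟨ht, hBle_k t c ht h⟩, h⟩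
      exact Finset.le_sup (f := id) this
    · intro h
      have : t ∈ FB c := by rw [hFBpre c]; exact Finset.mem_Icc.2 ⟨ht, h⟩
      exact (Finset.mem_filter.1 this).2
  have heDrange : ∀ c, eD c = 0 ∨ i ≤ eD c := by
    intro c
    rcases Finset.eq_empty_or_nonempty (FD c) with he | hne
    · left; rw [heD]; simp only; rw [he, Finset.sup_empty]; rfl
    · right
      obtain ⟨b, hb, hbe⟩ := Finset.exists_mem_eq_sup (FD c) hne id
      rw [heD]; simp only; rw [hbe]
      exact (Finset.mem_Icc.1 (Finset.mem_filter.1 hb).1).1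
  have heBrange : ∀ c, eB c = 0 ∨ i ≤ eB c := by
    intro c
    rcases Finset.eq_empty_or_nonempty (FB c) with he | hne
    · left; rw [heB]; simp only; rw [he, Finset.sup_empty]; rfl
    · right
      obtain ⟨b, hb, hbe⟩ := Finset.exists_mem_eq_sup (FB c) hne id
      rw [heB]; simp only; rw [hbe]
      exact (Finset.mem_Icc.1 (Finset.mem_filter.1 hb).1).1
  -- per-row counts
  have hcardrow : ∀ t, i ≤ t →
      (I.filter (fun c => (t, c) ∈ D)).card = (I.filter (fun c => (t, c) ∈ DB)).card := by
    intro t ht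
    by_cases htk : t ≤ k
    · obtain ⟨lt, hlt', hltD⟩ := lRow_attained (rowne t (by omega) htk)
      have hltli : li ≤ lt := by
        have := hlb t ht; rw [hlt', Nat.cast_le] at this; exact this
      have hrt : rRow D t ≤ r := hrb t ht htk
      have hltr : lt ≤ rRow D t := le_rRow hltD
      have hDset : I.filter (fun c => (t, c) ∈ D) = Finset.Icc lt (rRow D t) := by
        ext c
        simp only [Finset.mem_filter, Finset.mem_Icc, hI]
        rw [memD t c ht htk, hlt', Nat.cast_le]
        constructor
        · rintro ⟨_, h1, h2⟩; exact ⟨h1, h2⟩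
        · rintro ⟨h1, h2⟩; exact ⟨⟨by omega, by omega⟩, h1, h2⟩
      by_cases hbt : BRow D i t
      · have hli_lt : lt = li := by
          have := hbt.2; rw [hlt', hli, Nat.cast_inj] at this; exact this
        have hBset : I.filter (fun c => (t, c) ∈ DB) = Finset.Icc (li+1) (rRow D t + 1) := by
          ext c
          simp only [Finset.mem_filter, Finset.mem_Icc, hI]
          rw [memB1 t c hbt]
          constructor
          · rintro ⟨_, h1, h2⟩; exact ⟨h1, h2⟩
          · rintro ⟨h1, h2⟩; exact ⟨⟨by omega, by omega⟩, h1, h2⟩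
        rw [hDset, hBset, Nat.card_Icc, Nat.card_Icc]
        omega
      · have heq : I.filter (fun c => (t, c) ∈ DB) = I.filter (fun c => (t, c) ∈ D) := by
          ext c
          simp only [Finset.mem_filter]
          rw [memB2 t c hbt]
        rw [heq]
    · have e1 : I.filter (fun c => (t, c) ∈ D) = ∅ := by
        rw [Finset.filter_eq_empty_iff]
        intro c _ hc
        exact htk (hle_k t c hc)
      have e2 : I.filter (fun c => (t, c) ∈ DB) = ∅ := by
        rw [Finset.filter_eq_empty_iff]
        intro c _ hc
        exact htk (hBle_k t c ht hc)
      rw [e1, e2]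
  have hgecard : ∀ t, i ≤ t →
      (I.filter (fun c => t ≤ eD c)).card = (I.filter (fun c => t ≤ eB c)).card := by
    intro t ht
    have e1 : I.filter (fun c => t ≤ eD c) = I.filter (fun c => (t, c) ∈ D) := by
      ext c; simp only [Finset.mem_filter]
      rw [memDhigh c t ht]
    have e2 : I.filter (fun c => t ≤ eB c) = I.filter (fun c => (t, c) ∈ DB) := by
      ext c; simp only [Finset.mem_filter]
      rw [memBhigh c t ht]
    rw [e1, e2]
    exact hcardrow t ht
  have hvalcard : ∀ v, (I.filter (fun c => eD c = v)).card = (I.filter (fun c => eB c = v)).card := by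
    intro v
    rcases Nat.lt_or_ge v 1 with hv | hv
    · have hv0 : v = 0 := by omega
      subst hv0
      have e1 : I.filter (fun c => eD c = 0) = I \ I.filter (fun c => i ≤ eD c) := by
        ext c
        simp only [Finset.mem_filter, Finset.mem_sdiff]
        constructor
        · rintro ⟨hc, h0⟩
          exact ⟨hc, fun hm => by have := hm.2; omega⟩
        · rintro ⟨hc, h⟩
          refine ⟨hc, ?_⟩
          rcases heDrange c with h0 | h0
          · exact h0
          · exact absurd ⟨hc, h0⟩ h
      have e2 : I.filter (fun c => eB c = 0) = I \ I.filter (fun c => i ≤ eB c) := by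
        ext c
        simp only [Finset.mem_filter, Finset.mem_sdiff]
        constructor
        · rintro ⟨hc, h0⟩
          exact ⟨hc, fun hm => by have := hm.2; omega⟩
        · rintro ⟨hc, h⟩
          refine ⟨hc, ?_⟩
          rcases heBrange c with h0 | h0
          · exact h0
          · exact absurd ⟨hc, h0⟩ h
      rw [e1, e2, Finset.card_sdiff_of_subset (Finset.filter_subset _ _),
        Finset.card_sdiff_of_subset (Finset.filter_subset _ _), hgecard i (le_refl _)]
    · rcases Nat.lt_or_ge v i with hvi | hvi
      · have e1 : I.filter (fun c => eD c = v) = ∅ := by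
          rw [Finset.filter_eq_empty_iff]
          intro c _ hc
          rcases heDrange c with h0 | h0 <;> omega
        have e2 : I.filter (fun c => eB c = v) = ∅ := by
          rw [Finset.filter_eq_empty_iff]
          intro c _ hc
          rcases heBrange c with h0 | h0 <;> omega
        rw [e1, e2]
      · have e1 : I.filter (fun c => eD c = v)
            = I.filter (fun c => v ≤ eD c) \ I.filter (fun c => v + 1 ≤ eD c) := by
          ext c
          simp only [Finset.mem_filter, Finset.mem_sdiff]
          constructor
          · rintro ⟨hc, h0⟩
            exact ⟨⟨hc, by omega⟩, fun hm => by have := hm.2; omega⟩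
          · rintro ⟨⟨hc, h1⟩, h⟩
            refine ⟨hc, ?_⟩
            by_contra hne
            exact h ⟨hc, by omega⟩
        have e2 : I.filter (fun c => eB c = v)
            = I.filter (fun c => v ≤ eB c) \ I.filter (fun c => v + 1 ≤ eB c) := by
          ext c
          simp only [Finset.mem_filter, Finset.mem_sdiff]
          constructor
          · rintro ⟨hc, h0⟩
            exact ⟨⟨hc, by omega⟩, fun hm => by have := hm.2; omega⟩
          · rintro ⟨⟨hc, h1⟩, h⟩
            refine ⟨hc, ?_⟩
            by_contra hne
            exact h ⟨hc, by omega⟩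
        have hsub1 : I.filter (fun c => v + 1 ≤ eD c) ⊆ I.filter (fun c => v ≤ eD c) := by
          intro c hc
          obtain ⟨h1, h2⟩ := Finset.mem_filter.1 hc
          exact Finset.mem_filter.2 ⟨h1, by omega⟩
        have hsub2 : I.filter (fun c => v + 1 ≤ eB c) ⊆ I.filter (fun c => v ≤ eB c) := by
          intro c hc
          obtain ⟨h1, h2⟩ := Finset.mem_filter.1 hc
          exact Finset.mem_filter.2 ⟨h1, by omega⟩
        rw [e1, e2, Finset.card_sdiff_of_subset hsub1, Finset.card_sdiff_of_subset hsub2,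
          hgecard v hvi, hgecard (v+1) (by omega)]
  -- matching between columns
  obtain ⟨g, hmap, hinj, hsurj, hval⟩ := exists_matching I.card I I eD eB rfl rfl hvalcard
  have hmap' : ∀ c ∈ I, g c ∈ I := fun c hc => Finset.mem_coe.1 (hmap (Finset.mem_coe.2 hc))
  have hinj' : ∀ a ∈ I, ∀ b ∈ I, g a = g b → a = b := fun a ha b hb h =>
    hinj (Finset.mem_coe.2 ha) (Finset.mem_coe.2 hb) h
  have hsurj' : ∀ d ∈ I, ∃ c ∈ I, g c = d := by
    intro d hd
    obtain ⟨c, hc, h⟩ := hsurj (Finset.mem_coe.2 hd)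
    exact ⟨c, Finset.mem_coe.1 hc, h⟩
  set gg : ℕ → ℕ := fun c => if c ∈ I then g c else c with hgg
  have hggI : ∀ c ∈ I, gg c = g c := fun c hc => by simp only [hgg, if_pos hc]
  have hggO : ∀ c, c ∉ I → gg c = c := fun c hc => by simp only [hgg, if_neg hc]
  have hgginj : Function.Injective gg := by
    intro a b hab
    by_cases ha : a ∈ I <;> by_cases hb' : b ∈ I
    · rw [hggI a ha, hggI b hb'] at hab
      exact hinj' a ha b hb' hab
    · rw [hggI a ha, hggO b hb'] at hab
      exact absurd (hab ▸ hmap' a ha) hb'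
    · rw [hggO a ha, hggI b hb'] at hab
      exact absurd (hab ▸ hmap' b hb') ha
    · rw [hggO a ha, hggO b hb'] at hab
      exact hab
  -- S characterization for rows above i
  have hS : ∀ p c, p < i → c ∈ I → ((p, c) ∈ D ↔ (1 ≤ p ∧ lRow D p ≤ (li:ℕ∞))) := by
    intro p c hpi hcI
    rw [hI, Finset.mem_Icc] at hcI
    constructor
    · intro h
      have hp1 : 1 ≤ p := hge_1 p c h
      have hlpc := lRow_le h
      have hcli1 : ((c:ℕ) : ℕ∞) < lRow D (i-1) := by
        rw [hli1, Nat.cast_lt]; omega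
      have hcore := lshape_core hAS hmax p hp1 hpi (lt_of_le_of_lt hlpc hcli1)
      rw [hli] at hcore
      exact ⟨hp1, hcore⟩
    · rintro ⟨hp1, hple⟩
      have hne : (row D p).Nonempty := lRow_ne_top_iff.1 (fun hc => by
        rw [hc] at hple
        exact absurd (le_antisymm hple le_top).symm (WithTop.coe_ne_top (a := li)))
      have hpk : p ≤ k := ((hAS.1 p).1 hne).2
      rw [mem_char hAS hp1 hpk]
      constructor
      · refine le_trans hple ?_
        rw [Nat.cast_le]; omega
      · have h1 : rRow D (i-1) ≤ rRow D p := hAS.2.2.1 p (i-1) hp1 (by omega) (by omega)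
        omega
  -- forward map
  have fwd : ∀ p q, (p, q) ∈ D → (p, gg q) ∈ DB := by
    intro p q h
    by_cases hpi : i ≤ p
    · have hqI : q ∈ I := hrowI p q hpi h
      have h1 : p ≤ eD q := (memDhigh q p hpi).1 h
      have h2' : eB (g q) = eD q := hval q hqI
      rw [hggI q hqI]
      exact (memBhigh (g q) p hpi).2 (by omega)
    · push_neg at hpi
      have hnb : ¬ BRow D i p := fun hb => by have := hb.1; omega
      by_cases hqI : q ∈ I
      · have hSp := (hS p q hpi hqI).1 h
        rw [hggI q hqI, memB2 p _ hnb]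
        exact (hS p (g q) hpi (hmap' q hqI)).2 hSp
      · rw [hggO q hqI, memB2 p _ hnb]
        exact h
  -- backwards
  have bwd : ∀ p c, (p, c) ∈ DB → ∃ q, (p, q) ∈ D ∧ gg q = c := by
    intro p c h
    by_cases hpi : i ≤ p
    · have hcI : c ∈ I := hrowIB p c hpi h
      obtain ⟨q, hqI, hgq⟩ := hsurj' c hcI
      have h1 : p ≤ eB c := (memBhigh c p hpi).1 h
      have h2' : eB (g q) = eD q := hval q hqI
      rw [hgq] at h2'
      refine ⟨q, (memDhigh q p hpi).2 (by omega), ?_⟩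
      rw [hggI q hqI, hgq]
    · push_neg at hpi
      have hnb : ¬ BRow D i p := fun hb => by have := hb.1; omega
      rw [memB2 p c hnb] at h
      by_cases hcI : c ∈ I
      · obtain ⟨q, hqI, hgq⟩ := hsurj' c hcI
        have hSp := (hS p c hpi hcI).1 h
        refine ⟨q, (hS p q hpi hqI).2 hSp, ?_⟩
        rw [hggI q hqI, hgq]
      · exact ⟨c, h, hggO c hcI⟩
  -- build the bijection
  have hbij : Function.Bijective (fun b : {x : ℕ×ℕ // x ∈ D} =>
      (⟨(b.1.1, gg b.1.2), fwd b.1.1 b.1.2 (by rw [← Prod.mk.eta (p := b.1)]; exact b.2)⟩ :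
        {x : ℕ×ℕ // x ∈ DB})) := by
    constructor
    · intro a b hab
      have h1 : a.1.1 = b.1.1 := congrArg (fun x => x.1.1) hab
      have h2' : gg a.1.2 = gg b.1.2 := congrArg (fun x => x.1.2) hab
      have h3 : a.1.2 = b.1.2 := hgginj h2'
      exact Subtype.ext (Prod.ext h1 h3)
    · rintro ⟨⟨p, c⟩, hpc⟩
      obtain ⟨q, hq, hgq⟩ := bwd p c hpc
      exact ⟨⟨(p, q), hq⟩, Subtype.ext (Prod.ext rfl hgq)⟩
  exact ⟨Equiv.ofBijective _ hbij, gg, hgginj, fun b => rfl, fun b => rfl⟩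

end Comb

set_option maxHeartbeats 2000000 in
/-- For an almost skew diagram `D` and `i` the maximum index with
`l_{i-1} > l_i`: if only Step A is permitted, then `V^{D^A} ≅ V^D`, and if only Step B is
permitted, then `V^{D^B} ≅ V^D`, as `ℂ[Σ_D]`-modules (box sets identified by any
bijection). -/
theorem statement19 (D : Dg) (k i : ℕ) (hAS : AlmostSkew D k) (hmax : MaxViolation D i) :
    (∀ DA : Dg, StepAOk D i → ¬ StepBOk D i → IsStepA D DA i →
      ∀ φ : {x : ℕ × ℕ // x ∈ D} ≃ {x : ℕ × ℕ // x ∈ DA},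
        Nonempty ((Submodule.span (MonoidAlgebra ℂ (Equiv.Perm {x : ℕ × ℕ // x ∈ D}))
            {Csum (fun b : {x : ℕ × ℕ // x ∈ D} => (φ b).val.2) *
              Rsum (fun b : {x : ℕ × ℕ // x ∈ D} => (φ b).val.1)}) ≃ₗ[MonoidAlgebra ℂ
              (Equiv.Perm {x : ℕ × ℕ // x ∈ D})]
          (Submodule.span (MonoidAlgebra ℂ (Equiv.Perm {x : ℕ × ℕ // x ∈ D}))
            {Csum (fun b : {x : ℕ × ℕ // x ∈ D} => b.val.2) *
              Rsum (fun b : {x : ℕ × ℕ // x ∈ D} => b.val.1)}))) ∧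
    (∀ DB : Dg, StepBOk D i → ¬ StepAOk D i → IsStepB D DB i →
      ∀ ψ : {x : ℕ × ℕ // x ∈ D} ≃ {x : ℕ × ℕ // x ∈ DB},
        Nonempty ((Submodule.span (MonoidAlgebra ℂ (Equiv.Perm {x : ℕ × ℕ // x ∈ D}))
            {Csum (fun b : {x : ℕ × ℕ // x ∈ D} => (ψ b).val.2) *
              Rsum (fun b : {x : ℕ × ℕ // x ∈ D} => (ψ b).val.1)}) ≃ₗ[MonoidAlgebra ℂ
              (Equiv.Perm {x : ℕ × ℕ // x ∈ D})]
          (Submodule.span (MonoidAlgebra ℂ (Equiv.Perm {x : ℕ × ℕ // x ∈ D}))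
            {Csum (fun b : {x : ℕ × ℕ // x ∈ D} => b.val.2) *
              Rsum (fun b : {x : ℕ × ℕ // x ∈ D} => b.val.1)}))) := by
  constructor
  · intro DA hA hnB hDA φ
    obtain ⟨β, η, hη, hc, hr⟩ := stepA_beta hAS hmax DA hA hnB hDA
    exact specht_iso (fun b => b.val.2) (fun b => b.val.1) (fun b => b.val.2) (fun b => b.val.1)
      φ β id η Function.injective_id hη hc hr (fun b => (φ b).val.2) (fun b => (φ b).val.1)
      rfl rfl
  · intro DB hB hnA hDB ψ
    obtain ⟨β, ζ, hζ, hr, hc⟩ := stepB_beta hAS hmax DB hB hnA hDB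
    exact specht_iso (fun b => b.val.2) (fun b => b.val.1) (fun b => b.val.2) (fun b => b.val.1)
      ψ β ζ id hζ Function.injective_id hc hr (fun b => (ψ b).val.2) (fun b => (ψ b).val.1)
      rfl rfl
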